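/- Let D > 0, α < 0, β < 0, 0 < w₀ < w*, and set w̄ = w₀/(w₀ − w*). Then (w̄ − 1)(αw̄² − βw̄) > 0, and the value c = ĉ₂ := √D·(αw̄² − β)/√((w̄ − 1)(αw̄² − βw̄)) satisfies the C¹-matching condition for the piecewise-linear traveling wave: (w₀ − w*)·(√(c² − 4βD) − c) = w₀·(−√(c² − 4αD) − c). That is, the function w(x) = (w₀ − w*)·exp(x(√(c² − 4βD) − c)/(2D)) + w* for x < 0 and w(x) = w₀·exp(x(−√(c² − 4αD) − c)/(2D)) for x ≥ 0, which solves Dw'' + cw' + β(w − w*) = 0 on x < 0 and Dw'' + cw' + αw = 0 on x > 0 and is continuous at 0, has a continuous first derivative at 0. -/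

import Mathlib

open Set Filter

lemma glue_aux (A W B m1 m2 T : ℝ)
    (hval : A + W = B) (hder : A * m1 = B * m2)
    (w : ℝ → ℝ)
    (hw : ∀ x : ℝ, w x = if x < 0 then A * Real.exp (x * m1 / T) + W
        else B * Real.exp (x * m2 / T)) :
    DifferentiableAt ℝ w 0 ∧ ContinuousAt (deriv w) 0 := by
  set f1 : ℝ → ℝ := fun x => A * Real.exp (x * m1 / T) + W with hf1def
  set f2 : ℝ → ℝ := fun x => B * Real.exp (x * m2 / T) with hf2def
  have hf1 : ∀ x : ℝ, HasDerivAt f1 (A * (Real.exp (x * m1 / T) * (m1 / T))) x := by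
    intro x
    have h : HasDerivAt (fun x : ℝ => x * m1 / T) (m1 / T) x := by
      simpa using ((hasDerivAt_id x).mul_const m1).div_const T
    exact (h.exp.const_mul A).add_const W
  have hf2 : ∀ x : ℝ, HasDerivAt f2 (B * (Real.exp (x * m2 / T) * (m2 / T))) x := by
    intro x
    have h : HasDerivAt (fun x : ℝ => x * m2 / T) (m2 / T) x := by
      simpa using ((hasDerivAt_id x).mul_const m2).div_const T
    exact h.exp.const_mul B
  have hd1 : A * (m1 / T) = B * (m2 / T) := by
    rw [mul_div_assoc', mul_div_assoc', hder]
  have hw01 : ∀ y ∈ Iic (0:ℝ), w y = f1 y := by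
    intro y hy
    rcases (mem_Iic.mp hy).lt_or_eq with h | h
    · rw [hw y, if_pos h]
    · subst h; rw [hw 0, if_neg (lt_irrefl 0)]
      simp [hf1def, ← hval]
  have hw02 : ∀ y ∈ Ici (0:ℝ), w y = f2 y := by
    intro y hy
    rw [hw y, if_neg (not_lt.mpr hy)]
  have h1 : HasDerivWithinAt w (B * (m2 / T)) (Iic 0) 0 := by
    have h0 : HasDerivWithinAt f1 (B * (m2 / T)) (Iic 0) 0 := by
      have := (hf1 0).hasDerivWithinAt (s := Iic 0)
      simpa [hd1] using this
    exact h0.congr hw01 (hw01 0 (by simp))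
  have h2 : HasDerivWithinAt w (B * (m2 / T)) (Ici 0) 0 := by
    have h0 : HasDerivWithinAt f2 (B * (m2 / T)) (Ici 0) 0 := by
      have := (hf2 0).hasDerivWithinAt (s := Ici 0)
      simpa using this
    exact h0.congr hw02 (hw02 0 (by simp))
  have hder0 : HasDerivAt w (B * (m2 / T)) 0 := by
    have := h1.union h2
    rw [Iic_union_Ici] at this
    exact this.hasDerivAt (by simp)
  refine ⟨hder0.differentiableAt, ?_⟩
  set g : ℝ → ℝ := fun x => if x < 0 then A * (Real.exp (x * m1 / T) * (m1 / T))
      else B * (Real.exp (x * m2 / T) * (m2 / T)) with hgdef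
  have hdw : ∀ x : ℝ, deriv w x = g x := by
    intro x
    rcases lt_trichotomy x 0 with hx | hx | hx
    · have hev : w =ᶠ[nhds x] f1 := by
        filter_upwards [Iio_mem_nhds hx] with y hy
        rw [hw y, if_pos (mem_Iio.mp hy)]
      rw [hev.deriv_eq, (hf1 x).deriv, hgdef]
      simp [hx]
    · subst hx
      rw [hder0.deriv, hgdef]
      simp [hd1]
    · have hev : w =ᶠ[nhds x] f2 := by
        filter_upwards [Ioi_mem_nhds hx] with y hy
        rw [hw y, if_neg (not_lt.mpr (le_of_lt (mem_Ioi.mp hy)))]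
      rw [hev.deriv_eq, (hf2 x).deriv, hgdef]
      simp [not_lt.mpr hx.le]
  have hg : ContinuousAt g 0 := by
    have c1 : ContinuousWithinAt g (Iic 0) 0 := by
      have hc1 : Continuous (fun x : ℝ => A * (Real.exp (x * m1 / T) * (m1 / T))) := by
        continuity
      refine hc1.continuousWithinAt.congr ?_ ?_
      · intro y hy
        rcases (mem_Iic.mp hy).lt_or_eq with h | h
        · simp [hgdef, h]
        · subst h; simp [hgdef, hd1]
      · simp [hgdef, hd1]
    have c2 : ContinuousWithinAt g (Ici 0) 0 := by
      have hc2 : Continuous (fun x : ℝ => B * (Real.exp (x * m2 / T) * (m2 / T))) := by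
        continuity
      refine hc2.continuousWithinAt.congr ?_ ?_
      · intro y hy
        simp [hgdef, not_lt.mpr (mem_Ici.mp hy)]
      · simp [hgdef]
    have := c1.union c2
    rw [Iic_union_Ici] at this
    exact (continuousWithinAt_univ g 0).mp this
  exact hg.congr (Filter.Eventually.of_forall fun x => (hdw x).symm)

/-- With `w̄ = w₀/(w₀ - w*)`, the quantity `(w̄ - 1)(αw̄² - βw̄)` is
positive, and the speed `ĉ₂ = √D (αw̄² - β)/√((w̄ - 1)(αw̄² - βw̄))` satisfies the
C¹-matching condition `(w₀ - w*)(√(c² - 4βD) - c) = w₀(-√(c² - 4αD) - c)`; that is, the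
piecewise exponential traveling-wave profile is differentiable at `0`. -/
theorem stmt_13 (D α β w0 wstar : ℝ) (hD : 0 < D) (hα : α < 0) (hβ : β < 0)
    (hw0 : 0 < w0) (hw0' : w0 < wstar)
    (wbar : ℝ) (hwbar : wbar = w0 / (w0 - wstar))
    (c : ℝ)
    (hc : c = Real.sqrt D * (α * wbar ^ 2 - β) /
      Real.sqrt ((wbar - 1) * (α * wbar ^ 2 - β * wbar))) :
    0 < (wbar - 1) * (α * wbar ^ 2 - β * wbar) ∧
    (w0 - wstar) * (Real.sqrt (c ^ 2 - 4 * β * D) - c) =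
      w0 * (-Real.sqrt (c ^ 2 - 4 * α * D) - c) ∧
    ∀ w : ℝ → ℝ,
      (∀ x : ℝ, w x =
        if x < 0 then
          (w0 - wstar) * Real.exp (x * (Real.sqrt (c ^ 2 - 4 * β * D) - c) / (2 * D)) + wstar
        else
          w0 * Real.exp (x * (-Real.sqrt (c ^ 2 - 4 * α * D) - c) / (2 * D))) →
      DifferentiableAt ℝ w 0 ∧ ContinuousAt (deriv w) 0 := by
  have hwne : w0 - wstar ≠ 0 := by linarith
  have hwu : wbar * (w0 - wstar) = w0 := by
    rw [hwbar]; field_simp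
  have hu : wbar < 0 := by
    rw [hwbar]; exact div_neg_of_pos_of_neg hw0 (by linarith)
  have hu2 : 0 < wbar ^ 2 := by have := mul_pos_of_neg_of_neg hu hu; nlinarith
  have hQ : 0 < (wbar - 1) * (α * wbar ^ 2 - β * wbar) := by
    have h2 : α * wbar ^ 2 - β * wbar < 0 := by nlinarith
    exact mul_pos_of_neg_of_neg (by linarith) h2
  have hkey : (w0 - wstar) * (Real.sqrt (c ^ 2 - 4 * β * D) - c) =
      w0 * (-Real.sqrt (c ^ 2 - 4 * α * D) - c) := by
    set s := Real.sqrt D with hs_def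
    set t := Real.sqrt ((wbar - 1) * (α * wbar ^ 2 - β * wbar)) with ht_def
    have hs : s ^ 2 = D := Real.sq_sqrt hD.le
    have ht : t ^ 2 = (wbar - 1) * (α * wbar ^ 2 - β * wbar) := Real.sq_sqrt hQ.le
    have hspos : 0 < s := Real.sqrt_pos.mpr hD
    have htpos : 0 < t := Real.sqrt_pos.mpr hQ
    have hNβ : 0 < 2 * β * wbar - β - α * wbar ^ 2 := by nlinarith
    have hNα : 0 < 2 * α * wbar - β - α * wbar ^ 2 := by nlinarith
    have hsqβ : Real.sqrt (c ^ 2 - 4 * β * D) = s * (2 * β * wbar - β - α * wbar ^ 2) / t := by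
      have h : c ^ 2 - 4 * β * D = (s * (2 * β * wbar - β - α * wbar ^ 2) / t) ^ 2 := by
        rw [hc, ← hs]
        field_simp
        linear_combination (-4 * β) * ht
      rw [h, Real.sqrt_sq (by positivity)]
    have hsqα : Real.sqrt (c ^ 2 - 4 * α * D) = s * (2 * α * wbar - β - α * wbar ^ 2) / t := by
      have h : c ^ 2 - 4 * α * D = (s * (2 * α * wbar - β - α * wbar ^ 2) / t) ^ 2 := by
        rw [hc, ← hs]
        field_simp
        linear_combination (-4 * α) * ht
      rw [h, Real.sqrt_sq (by positivity)]
    rw [hsqβ, hsqα, hc]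
    field_simp
    linear_combination (2 * (β - α * wbar)) * hwu

  refine ⟨hQ, hkey, ?_⟩
  intro w hw
  exact glue_aux (w0 - wstar) wstar w0 _ _ (2 * D) (by ring) hkey w hw
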